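/- Luo's explicit formula: define ν̃(t,x) = ν̃₀(xe^t/(1+x(e^t−1)))·e^{t−λ∫₀ᵗh(s)ds}·(1+x(e^t−1))^{λ−2} where h(t)=∫₀¹ y ν̃(t,y)dy. If ν̃₀ is continuous and there exists x₀ < 1 with ν̃₀(y)=0 for all y ∈ [x₀,1], then for every ε > 0 and every x ≥ ε, ν̃(t,x) = 0 for all sufficiently large t. -/

import Mathlib

open Real MeasureTheory

/-- Luo's explicit formula.  If ν̃₀ is continuous and vanishes on
[x₀,1] for some x₀ < 1, then for every ε > 0 and every x ∈ [ε,1], the solution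
ν̃(t,x) = ν̃₀(xe^t/(1+x(e^t−1)))·e^{t−λ∫₀ᵗh}·(1+x(e^t−1))^(λ−2) vanishes for all
sufficiently large t. -/
theorem stmt7 (ν₀ : ℝ → ℝ) (hν₀ : Continuous ν₀) (x₀ : ℝ) (hx₀ : x₀ < 1)
    (hzero : ∀ y ∈ Set.Icc x₀ 1, ν₀ y = 0) (lam : ℝ) (h : ℝ → ℝ) :
    ∀ ε : ℝ, 0 < ε → ∃ t₀ : ℝ, ∀ t : ℝ, t₀ ≤ t → ∀ x : ℝ, ε ≤ x → x ≤ 1 →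
      ν₀ (x * Real.exp t / (1 + x * (Real.exp t - 1))) *
        Real.exp (t - lam * ∫ s in (0:ℝ)..t, h s) *
        (1 + x * (Real.exp t - 1)) ^ (lam - 2) = 0 := by
  intro ε hε
  have h1x₀ : 0 < 1 - x₀ := by linarith
  set C : ℝ := 1 / (ε * (1 - x₀)) with hC
  have hCpos : 0 < C := by positivity
  refine ⟨Real.log (1 + C), fun t ht x hεx hx1 => ?_⟩
  have hxpos : 0 < x := lt_of_lt_of_le hε hεx
  have hexp : 1 + C ≤ Real.exp t := by
    calc 1 + C = Real.exp (Real.log (1 + C)) := (Real.exp_log (by linarith)).symm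
    _ ≤ Real.exp t := Real.exp_le_exp.mpr ht
  have he1 : C ≤ Real.exp t - 1 := by linarith
  have hxe : 1 / (1 - x₀) ≤ x * (Real.exp t - 1) := by
    have : ε * C ≤ x * (Real.exp t - 1) :=
      mul_le_mul hεx he1 hCpos.le hxpos.le
    calc 1 / (1 - x₀) = ε * C := by rw [hC]; field_simp
    _ ≤ x * (Real.exp t - 1) := this
  set D : ℝ := 1 + x * (Real.exp t - 1) with hD
  have hDge : 1 / (1 - x₀) ≤ D := by
    have : 0 < 1 / (1 - x₀) := by positivity
    simp only [hD]; linarith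
  have hDpos : 0 < D := lt_of_lt_of_le (by positivity) hDge
  set z : ℝ := x * Real.exp t / D with hz
  have hz1 : z ≤ 1 := by
    rw [hz, div_le_one hDpos, hD]
    have := Real.exp_pos t
    nlinarith
  have hzx₀ : x₀ ≤ z := by
    have key : (1 - x) / D ≤ 1 - x₀ := by
      have h1 : (1 - x) / D ≤ 1 / D := by
        gcongr; linarith
      have h2 : 1 / D ≤ 1 - x₀ := by
        rw [div_le_iff₀ hDpos]
        calc (1:ℝ) = (1 - x₀) * (1 / (1 - x₀)) := by field_simp
        _ ≤ (1 - x₀) * D := by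
            exact mul_le_mul_of_nonneg_left hDge h1x₀.le
      linarith
    have hzeq : z = 1 - (1 - x) / D := by
      rw [hz, eq_sub_iff_add_eq, ← add_div, div_eq_one_iff_eq hDpos.ne']
      ring
    rw [hzeq]; linarith
  rw [hzero z ⟨hzx₀, hz1⟩, zero_mul, zero_mul]
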